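/- arXiv:1208.2859 — 4 statements merged into one kernel-verified Lean document; each statement's English description precedes it below -/
import Mathlib

section
/- Let w be a permutation with code c(w), and let i_0 = max{i : c_i ≠ 0} be the length of the code. If w has no descent in any position i > w^{-1}(1), then the number of boxes in the first column of the diagram of w equals i_0 (the length of the code). -/
/-- The code of a permutation: `c_i = #{j > i : w(j) < w(i)}`. -/
def permCode {n : ℕ} (w : Equiv.Perm (Fin n)) (i : Fin n) : ℕ :=
  (Finset.univ.filter fun j : Fin n => i < j ∧ w j < w i).card

/-- Let `i₀` be the largest index with nonzero code entry (so the length of the code of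
`w` is `i₀ + 1` when `0`-indexed).  If `w` has no descent in any position strictly after
the position of the value `1`, then the number of boxes in the first column of the
diagram of `w` equals the length of the code. -/
theorem stmt7 (n : ℕ) (w : Equiv.Perm (Fin (n + 1))) (i₀ : Fin (n + 1))
    (h1 : permCode w i₀ ≠ 0) (h2 : ∀ j, i₀ < j → permCode w j = 0)
    (hnd : ∀ i : Fin n, ((w⁻¹ 0 : Fin (n + 1)) : ℕ) < (i : ℕ) →
      ¬ w i.succ < w i.castSucc) :
    (Finset.univ.filter fun i : Fin (n + 1) =>
        (0 : Fin (n + 1)) < w i ∧ i < w⁻¹ 0).card = (i₀ : ℕ) + 1 := by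
  set p : Fin (n+1) := w⁻¹ 0 with hp
  have hwp : w p = 0 := Equiv.apply_symm_apply w 0
  -- strict monotonicity after position p
  have mono : ∀ b a : Fin (n+1), (p:ℕ) < (a:ℕ) → a < b → w a < w b := by
    intro b
    induction b using Fin.induction with
    | zero => intro a _ hab; exact absurd hab (Fin.not_lt_zero a)
    | succ b ih =>
      intro a hpa hab
      have hab' : (a:ℕ) ≤ (b.castSucc : ℕ) := by
        have := Fin.lt_def.mp hab
        simpa [Fin.val_succ] using Nat.lt_succ_iff.mp (by simpa [Fin.val_succ] using this)
      have hppb : (p:ℕ) < (b.castSucc : ℕ) := lt_of_lt_of_le hpa hab'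
      have hstep : w b.castSucc < w b.succ := by
        have hne : w b.castSucc ≠ w b.succ := by
          intro h
          have := w.injective h
          have : (b.castSucc : ℕ) = (b.succ : ℕ) := by rw [this]
          simp [Fin.val_succ] at this
        rcases lt_or_gt_of_ne hne with h | h
        · exact h
        · exact absurd h (hnd b (by simpa using hppb))
      rcases eq_or_lt_of_le hab' with h | h
      · have : a = b.castSucc := Fin.ext h
        rw [this]; exact hstep
      · exact lt_trans (ih a hpa (Fin.lt_def.mpr h)) hstep
  -- code is zero at positions ≥ p
  have codeZero : ∀ i : Fin (n+1), (p:ℕ) ≤ (i:ℕ) → permCode w i = 0 := by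
    intro i hi
    rw [permCode, Finset.card_eq_zero, Finset.filter_eq_empty_iff]
    intro j _
    rintro ⟨hij, hwj⟩
    rcases eq_or_lt_of_le hi with h | h
    · have : i = p := Fin.ext h.symm
      rw [this, hwp] at hwj
      exact absurd hwj (Fin.not_lt_zero _)
    · exact absurd (mono j i h hij) (not_lt.mpr (le_of_lt hwj))
  -- code is nonzero at positions < p
  have codePos : ∀ i : Fin (n+1), i < p → permCode w i ≠ 0 := by
    intro i hi
    have hmem : p ∈ Finset.univ.filter fun j : Fin (n+1) => i < j ∧ w j < w i := by
      refine Finset.mem_filter.mpr ⟨Finset.mem_univ _, hi, ?_⟩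
      rw [hwp]
      exact Fin.pos_iff_ne_zero.mpr (fun h => by
        exact absurd (w.injective (h.trans hwp.symm)) (ne_of_lt hi))
    exact Finset.card_ne_zero_of_mem hmem
  -- hence i₀ + 1 = p
  have hi0p : (i₀ : ℕ) < (p : ℕ) := by
    by_contra h
    exact h1 (codeZero i₀ (not_lt.mp h))
  have hple : (p : ℕ) ≤ (i₀ : ℕ) + 1 := by
    by_contra h
    push_neg at h
    have hlt : (i₀ : ℕ) + 1 < n + 1 := lt_of_lt_of_le h (Nat.lt_succ_iff.mp p.isLt |>.trans_lt (Nat.lt_succ_self n) |> le_of_lt)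
    set j : Fin (n+1) := ⟨(i₀:ℕ)+1, lt_trans h p.isLt⟩ with hj
    have : permCode w j = 0 := h2 j (Fin.lt_def.mpr (Nat.lt_succ_self _))
    exact codePos j (Fin.lt_def.mpr h) this
  have hpeq : (p : ℕ) = (i₀ : ℕ) + 1 := le_antisymm hple hi0p
  -- the first column set is exactly {i : i < p}
  have hset : (Finset.univ.filter fun i : Fin (n+1) => (0 : Fin (n+1)) < w i ∧ i < p)
      = Finset.univ.filter fun i : Fin (n+1) => i < p := by
    apply Finset.filter_congr
    intro i _
    constructor
    · rintro ⟨_, h⟩; exact h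
    · intro h
      refine ⟨Fin.pos_iff_ne_zero.mpr (fun h0 => ?_), h⟩
      exact absurd (w.injective (h0.trans hwp.symm)) (ne_of_lt h)
  rw [hset, ← hpeq]
  have : (Finset.univ.filter fun i : Fin (n+1) => i < p) = Finset.Iio p := by
    ext x; simp [Finset.mem_Iio]
  rw [this, Fin.card_Iio]
end

section
/- Let w ∈ S_n be a permutation with w ≠ identity, let r be the largest descent of w and let s be the largest index with w(s) < w(r). Then r < s, ℓ(w t_{rs}) = ℓ(w) - 1, and for any j < r such that ℓ(w t_{rs} t_{jr}) = ℓ(w), the permutation v = w t_{rs} t_{jr} satisfies: the largest descent of v is at most r. -/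
/-- The length of a permutation: its number of inversions. -/
def permLength {n : ℕ} (w : Equiv.Perm (Fin n)) : ℕ :=
  (Finset.univ.filter fun p : Fin n × Fin n => p.1 < p.2 ∧ w p.2 < w p.1).card

/-- Auxiliary map used as bijection between inversion sets. -/
def Ff {m : ℕ} (a b : Fin m) (x : Fin m × Fin m) : Fin m × Fin m :=
  if x.1 = a ∧ x.2 < b then x
  else if x.2 = b ∧ a < x.1 then x
  else (Equiv.swap a b x.1, Equiv.swap a b x.2)

lemma Ff_A {m : ℕ} {a b p q : Fin m} (h1 : p = a ∧ q < b) :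
    Ff a b (p, q) = (p, q) := by simp only [Ff]; rw [if_pos h1]

lemma Ff_B {m : ℕ} {a b p q : Fin m} (h1 : ¬(p = a ∧ q < b)) (h2 : q = b ∧ a < p) :
    Ff a b (p, q) = (p, q) := by simp only [Ff]; rw [if_neg h1, if_pos h2]

lemma Ff_C {m : ℕ} {a b p q : Fin m} (h1 : ¬(p = a ∧ q < b)) (h2 : ¬(q = b ∧ a < p)) :
    Ff a b (p, q) = (Equiv.swap a b p, Equiv.swap a b q) := by
  simp only [Ff, if_neg h1, if_neg h2]

lemma Ff_invol {m : ℕ} (a b : Fin m) (hab : a < b) (x : Fin m × Fin m)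
    (hx : x.1 < x.2) : Ff a b (Ff a b x) = x := by
  obtain ⟨p, q⟩ := x
  simp only at hx
  by_cases h1 : p = a ∧ q < b
  · rw [Ff_A h1, Ff_A h1]
  · by_cases h2 : q = b ∧ a < p
    · rw [Ff_B h1 h2, Ff_B h1 h2]
    · rw [Ff_C h1 h2]
      by_cases hpa : p = a
      · have hbq : b ≤ q := le_of_not_gt fun h => h1 ⟨hpa, h⟩
        rcases eq_or_lt_of_le hbq with hqb | hqb
        · rw [hpa, ← hqb, Equiv.swap_apply_left, Equiv.swap_apply_right]
          have c1 : ¬(b = a ∧ a < b) := fun h => absurd h.1 hab.ne'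
          have c2 : ¬(a = b ∧ a < b) := fun h => absurd h.1 hab.ne
          rw [Ff_C c1 c2, Equiv.swap_apply_left, Equiv.swap_apply_right]
        · have hqa : q ≠ a := (hab.trans hqb).ne'
          have hqb' : q ≠ b := hqb.ne'
          rw [hpa, Equiv.swap_apply_left, Equiv.swap_apply_of_ne_of_ne hqa hqb']
          have c1 : ¬(b = a ∧ q < b) := fun h => absurd h.1 hab.ne'
          have c2 : ¬(q = b ∧ a < b) := fun h => absurd h.1 hqb'
          rw [Ff_C c1 c2, Equiv.swap_apply_right, Equiv.swap_apply_of_ne_of_ne hqa hqb']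
      · by_cases hqb : q = b
        · have hpa2 : p < a := lt_of_le_of_ne (le_of_not_gt fun h => h2 ⟨hqb, h⟩) hpa
          have hpb : p ≠ b := (hpa2.trans hab).ne
          rw [hqb, Equiv.swap_apply_right, Equiv.swap_apply_of_ne_of_ne hpa hpb]
          have c1 : ¬(p = a ∧ a < b) := fun h => absurd h.1 hpa
          have c2 : ¬(a = b ∧ a < p) := fun h => absurd h.1 hab.ne
          rw [Ff_C c1 c2, Equiv.swap_apply_left, Equiv.swap_apply_of_ne_of_ne hpa hpb]
        · by_cases hqa : q = a
          · have hpa2 : p < a := hqa ▸ hx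
            have hpb : p ≠ b := (hpa2.trans hab).ne
            rw [hqa, Equiv.swap_apply_left, Equiv.swap_apply_of_ne_of_ne hpa hpb]
            have c1 : ¬(p = a ∧ b < b) := fun h => absurd h.2 (lt_irrefl b)
            have c2 : ¬(b = b ∧ a < p) := fun h => absurd h.2 (not_lt.2 hpa2.le)
            rw [Ff_C c1 c2, Equiv.swap_apply_right, Equiv.swap_apply_of_ne_of_ne hpa hpb]
          · by_cases hpb : p = b
            · have hbq : b < q := hpb ▸ hx
              have hqb' : q ≠ b := hbq.ne'
              rw [hpb, Equiv.swap_apply_right, Equiv.swap_apply_of_ne_of_ne hqa hqb']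
              have c1 : ¬(a = a ∧ q < b) := fun h => absurd h.2 (not_lt.2 hbq.le)
              have c2 : ¬(q = b ∧ a < a) := fun h => absurd h.1 hqb'
              rw [Ff_C c1 c2, Equiv.swap_apply_left, Equiv.swap_apply_of_ne_of_ne hqa hqb']
            · rw [Equiv.swap_apply_of_ne_of_ne hpa hpb,
                Equiv.swap_apply_of_ne_of_ne hqa hqb, Ff_C h1 h2,
                Equiv.swap_apply_of_ne_of_ne hpa hpb,
                Equiv.swap_apply_of_ne_of_ne hqa hqb]

lemma length_mul_swap {m : ℕ} (w : Equiv.Perm (Fin m)) (a b : Fin m)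
    (hab : a < b) (hw : w b < w a) (H : ∀ k, a < k → k < b → w k < w b) :
    permLength (w * Equiv.swap a b) + 1 = permLength w := by
  classical
  set u := w * Equiv.swap a b with hu
  have hua : u a = w b := by
    simp [hu, Equiv.Perm.mul_apply, Equiv.swap_apply_left]
  have hub : u b = w a := by
    simp [hu, Equiv.Perm.mul_apply, Equiv.swap_apply_right]
  have huo : ∀ x, x ≠ a → x ≠ b → u x = w x := fun x h1 h2 => by
    simp [hu, Equiv.Perm.mul_apply, Equiv.swap_apply_of_ne_of_ne h1 h2]
  set S := Finset.univ.filter fun p : Fin m × Fin m => p.1 < p.2 ∧ w p.2 < w p.1 with hS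
  set T := Finset.univ.filter fun p : Fin m × Fin m => p.1 < p.2 ∧ u p.2 < u p.1 with hT
  have hmemS : ∀ x : Fin m × Fin m, x ∈ S ↔ x.1 < x.2 ∧ w x.2 < w x.1 := by
    intro x; simp [hS]
  have hmemT : ∀ x : Fin m × Fin m, x ∈ T ↔ x.1 < x.2 ∧ u x.2 < u x.1 := by
    intro x; simp [hT]
  have habS : (a, b) ∈ S := (hmemS _).2 ⟨hab, hw⟩
  -- forward direction
  have fwd : ∀ x ∈ T, Ff a b x ∈ S.erase (a, b) := by
    rintro ⟨p, q⟩ hx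
    obtain ⟨hpq, hinv⟩ := (hmemT _).1 hx
    simp only at hpq hinv
    rw [Finset.mem_erase]
    by_cases h1 : p = a ∧ q < b
    · obtain ⟨hpa, hqb⟩ := h1
      rw [hpa, hua, huo q (hpa ▸ hpq).ne' hqb.ne] at hinv
      rw [Ff_A ⟨hpa, hqb⟩]
      refine ⟨fun h => absurd (congrArg Prod.snd h) hqb.ne,
        (hmemS _).2 ⟨hpq, ?_⟩⟩
      show w q < w p
      rw [hpa]; exact hinv.trans hw
    · by_cases h2 : q = b ∧ a < p
      · obtain ⟨hqb, hap⟩ := h2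
        rw [hqb, hub, huo p hap.ne' (hqb ▸ hpq).ne] at hinv
        exact absurd ((H p hap (hqb ▸ hpq)).trans hw) (not_lt.2 hinv.le)
      · by_cases hpa : p = a
        · have hbq : b ≤ q := le_of_not_gt fun h => h1 ⟨hpa, h⟩
          rcases eq_or_lt_of_le hbq with hqb | hqb
          · rw [hpa, ← hqb, hua, hub] at hinv
            exact absurd hw (not_lt.2 hinv.le)
          · have hqa : q ≠ a := (hab.trans hqb).ne'
            rw [hpa, hua, huo q hqa hqb.ne'] at hinv
            rw [Ff_C h1 h2, hpa, Equiv.swap_apply_left,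
              Equiv.swap_apply_of_ne_of_ne hqa hqb.ne']
            exact ⟨fun h => absurd (congrArg Prod.fst h) hab.ne',
              (hmemS _).2 ⟨hqb, hinv⟩⟩
        · by_cases hqb : q = b
          · have hpa2 : p < a := lt_of_le_of_ne (le_of_not_gt fun h => h2 ⟨hqb, h⟩) hpa
            have hpb : p ≠ b := (hpa2.trans hab).ne
            rw [hqb, hub, huo p hpa hpb] at hinv
            rw [Ff_C h1 h2, hqb, Equiv.swap_apply_right,
              Equiv.swap_apply_of_ne_of_ne hpa hpb]
            exact ⟨fun h => absurd (congrArg Prod.snd h) hab.ne,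
              (hmemS _).2 ⟨hpa2, hinv⟩⟩
          · by_cases hqa : q = a
            · have hpa2 : p < a := hqa ▸ hpq
              have hpb : p ≠ b := (hpa2.trans hab).ne
              rw [hqa, hua, huo p hpa hpb] at hinv
              rw [Ff_C h1 h2, hqa, Equiv.swap_apply_left,
                Equiv.swap_apply_of_ne_of_ne hpa hpb]
              exact ⟨fun h => absurd (congrArg Prod.fst h) hpa,
                (hmemS _).2 ⟨hpa2.trans hab, hinv⟩⟩
            · by_cases hpb : p = b
              · have hbq : b < q := hpb ▸ hpq
                rw [hpb, hub, huo q hqa hbq.ne'] at hinv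
                rw [Ff_C h1 h2, hpb, Equiv.swap_apply_right,
                  Equiv.swap_apply_of_ne_of_ne hqa hbq.ne']
                exact ⟨fun h => absurd (congrArg Prod.snd h) hbq.ne',
                  (hmemS _).2 ⟨hab.trans hbq, hinv⟩⟩
              · rw [huo p hpa hpb, huo q hqa hqb] at hinv
                rw [Ff_C h1 h2, Equiv.swap_apply_of_ne_of_ne hpa hpb,
                  Equiv.swap_apply_of_ne_of_ne hqa hqb]
                exact ⟨fun h => absurd (congrArg Prod.fst h) hpa,
                  (hmemS _).2 ⟨hpq, hinv⟩⟩
  -- backward direction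
  have bwd : ∀ x ∈ S.erase (a, b), Ff a b x ∈ T := by
    rintro ⟨p, q⟩ hx
    rw [Finset.mem_erase] at hx
    obtain ⟨hne, hxS⟩ := hx
    obtain ⟨hpq, hinv⟩ := (hmemS _).1 hxS
    simp only at hpq hinv
    by_cases h1 : p = a ∧ q < b
    · obtain ⟨hpa, hqb⟩ := h1
      rw [Ff_A ⟨hpa, hqb⟩]
      refine (hmemT _).2 ⟨hpq, ?_⟩
      rw [hpa, hua, huo q (hpa ▸ hpq).ne' hqb.ne]
      exact H q (hpa ▸ hpq) hqb
    · by_cases h2 : q = b ∧ a < p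
      · obtain ⟨hqb, hap⟩ := h2
        rw [hqb] at hinv
        exact absurd hinv (not_lt.2 (H p hap (hqb ▸ hpq)).le)
      · by_cases hpa : p = a
        · have hbq : b ≤ q := le_of_not_gt fun h => h1 ⟨hpa, h⟩
          rcases eq_or_lt_of_le hbq with hqb | hqb
          · exact absurd (Prod.ext hpa hqb.symm) hne
          · have hqa : q ≠ a := (hab.trans hqb).ne'
            rw [Ff_C h1 h2, hpa, Equiv.swap_apply_left,
              Equiv.swap_apply_of_ne_of_ne hqa hqb.ne']
            refine (hmemT _).2 ⟨hqb, ?_⟩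
            rw [hub, huo q hqa hqb.ne']
            rw [hpa] at hinv; exact hinv
        · by_cases hqb : q = b
          · have hpa2 : p < a := lt_of_le_of_ne (le_of_not_gt fun h => h2 ⟨hqb, h⟩) hpa
            have hpb : p ≠ b := (hpa2.trans hab).ne
            rw [Ff_C h1 h2, hqb, Equiv.swap_apply_right,
              Equiv.swap_apply_of_ne_of_ne hpa hpb]
            refine (hmemT _).2 ⟨hpa2, ?_⟩
            rw [hua, huo p hpa hpb]
            rw [hqb] at hinv; exact hinv
          · by_cases hqa : q = a
            · have hpa2 : p < a := hqa ▸ hpq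
              have hpb : p ≠ b := (hpa2.trans hab).ne
              rw [Ff_C h1 h2, hqa, Equiv.swap_apply_left,
                Equiv.swap_apply_of_ne_of_ne hpa hpb]
              refine (hmemT _).2 ⟨hpa2.trans hab, ?_⟩
              rw [hub, huo p hpa hpb]
              rw [hqa] at hinv; exact hinv
            · by_cases hpb : p = b
              · have hbq : b < q := hpb ▸ hpq
                rw [Ff_C h1 h2, hpb, Equiv.swap_apply_right,
                  Equiv.swap_apply_of_ne_of_ne hqa hbq.ne']
                refine (hmemT _).2 ⟨hab.trans hbq, ?_⟩
                rw [hua, huo q hqa hbq.ne']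
                rw [hpb] at hinv; exact hinv
              · rw [Ff_C h1 h2, Equiv.swap_apply_of_ne_of_ne hpa hpb,
                  Equiv.swap_apply_of_ne_of_ne hqa hqb]
                refine (hmemT _).2 ⟨hpq, ?_⟩
                rw [huo p hpa hpb, huo q hqa hqb]; exact hinv
  have key : T.card = (S.erase (a, b)).card :=
    Finset.card_bij' (fun x _ => Ff a b x) (fun x _ => Ff a b x) fwd bwd
      (fun x hx => Ff_invol a b hab x ((hmemT _).1 hx).1)
      (fun x hx => Ff_invol a b hab x ((hmemS _).1 (Finset.mem_of_mem_erase hx)).1)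
  have hcard : (S.erase (a, b)).card + 1 = S.card := by
    rw [Finset.card_erase_of_mem habS]
    exact Nat.succ_pred_eq_of_pos (Finset.card_pos.2 ⟨_, habS⟩)
  calc permLength u + 1 = T.card + 1 := rfl
    _ = (S.erase (a, b)).card + 1 := by rw [key]
    _ = S.card := hcard

lemma chain {n : ℕ} (w : Equiv.Perm (Fin (n + 1))) (r : Fin n)
    (hrmax : ∀ i : Fin n, r < i → ¬ w i.succ < w i.castSucc) :
    ∀ q p : Fin (n + 1), r.castSucc < p → p < q → w p < w q := by
  intro q
  induction q using Fin.induction with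
  | zero => intro p _ h; exact absurd h (Fin.not_lt_zero p)
  | succ i ih =>
    intro p hrp hpq
    have hri : r < i := by
      have h2 : (r.castSucc : Fin (n + 1)).val < p.val := hrp
      have h3 : p.val < i.val + 1 := hpq
      have h4 : (r.castSucc : Fin (n + 1)).val = r.val := rfl
      exact Fin.lt_def.2 (by omega)
    have hstep : w i.castSucc < w i.succ := by
      have h2 : w i.castSucc ≤ w i.succ := le_of_not_gt (hrmax i hri)
      exact lt_of_le_of_ne h2 fun h => (Fin.castSucc_lt_succ (i := i)).ne (w.injective h)
    rcases eq_or_lt_of_le (Fin.le_castSucc_iff.2 hpq) with hpi | hpi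
    · rw [hpi]; exact hstep
    · exact (ih p hrp hpi).trans hstep

/-- Maximal transition: let `w ≠ 1`, let `r` be the largest descent of `w` and `s` the
largest index with `w(s) < w(r)`.  Then `r < s`, `ℓ(w t_{rs}) = ℓ(w) - 1`, and for any
`j < r` with `ℓ(w t_{rs} t_{jr}) = ℓ(w)`, the largest descent of `v = w t_{rs} t_{jr}`
is at most `r`. -/
theorem stmt8 (n : ℕ) (w : Equiv.Perm (Fin (n + 1))) (hw : w ≠ 1)
    (r : Fin n) (hr : w r.succ < w r.castSucc)
    (hrmax : ∀ i : Fin n, r < i → ¬ w i.succ < w i.castSucc)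
    (s : Fin (n + 1)) (hs : w s < w r.castSucc)
    (hsmax : ∀ i : Fin (n + 1), s < i → ¬ w i < w r.castSucc) :
    r.castSucc < s ∧
    permLength (w * Equiv.swap r.castSucc s) + 1 = permLength w ∧
    ∀ j : Fin (n + 1), j < r.castSucc →
      permLength (w * Equiv.swap r.castSucc s * Equiv.swap j r.castSucc) = permLength w →
      ∀ i : Fin n,
        (w * Equiv.swap r.castSucc s * Equiv.swap j r.castSucc) i.succ <
          (w * Equiv.swap r.castSucc s * Equiv.swap j r.castSucc) i.castSucc →
        i ≤ r := by
  have hmono := chain w r hrmax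
  have hrs : r.castSucc < s := by
    by_contra h
    push_neg at h
    exact hsmax r.succ (lt_of_le_of_lt h (Fin.castSucc_lt_succ (i := r))) hr
  refine ⟨hrs, length_mul_swap w r.castSucc s hrs hs (fun k h1 h2 => hmono s k h1 h2), ?_⟩
  intro j hj _ i hdes
  by_contra hri'
  push_neg at hri'
  have hp1 : r.castSucc < i.castSucc := Fin.castSucc_lt_castSucc_iff.2 hri'
  have hq1 : r.castSucc < i.succ := hp1.trans (Fin.castSucc_lt_succ (i := i))
  have hval : ∀ x : Fin (n + 1), r.castSucc < x →
      (w * Equiv.swap r.castSucc s * Equiv.swap j r.castSucc) x =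
        w (Equiv.swap r.castSucc s x) := by
    intro x hx
    have hxj : x ≠ j := (hj.trans hx).ne'
    have hxr : x ≠ r.castSucc := hx.ne'
    simp [Equiv.Perm.mul_apply, Equiv.swap_apply_of_ne_of_ne hxj hxr]
  rw [hval _ hp1, hval _ hq1] at hdes
  rcases eq_or_ne i.succ s with hqs | hqs
  · have hps : i.castSucc < s := hqs ▸ Fin.castSucc_lt_succ (i := i)
    rw [hqs, Equiv.swap_apply_right,
      Equiv.swap_apply_of_ne_of_ne hp1.ne' hps.ne] at hdes
    exact absurd (((hmono s i.castSucc hp1 hps).trans hs).trans hdes) (lt_irrefl _)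
  · rcases eq_or_ne i.castSucc s with hps | hps
    · have hsq : s < i.succ := hps ▸ Fin.castSucc_lt_succ (i := i)
      rw [hps, Equiv.swap_apply_right,
        Equiv.swap_apply_of_ne_of_ne hq1.ne' hqs] at hdes
      exact hsmax i.succ hsq hdes
    · rw [Equiv.swap_apply_of_ne_of_ne hq1.ne' hqs,
        Equiv.swap_apply_of_ne_of_ne hp1.ne' hps] at hdes
      exact hrmax i hri' hdes
end

section
/- Let w be a non-identity permutation, r its largest descent and s the largest index with w(s) < w(r). If there is no j < r with ℓ(w t_{rs} t_{jr}) = ℓ(w) (i.e., w is 'reduced' in the maximal-transition sense), then w has no descent at any position i > w^{-1}(1); equivalently w(r+1) = 1. -/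
/-- Descent with no "middle" value: multiplying by the swap drops length by one. -/
lemma swap_length {m : ℕ} (w : Equiv.Perm (Fin m)) (a b : Fin m) (hab : a < b)
    (hw : w b < w a)
    (hmid : ∀ k : Fin m, a < k → k < b → w k < w b ∨ w a < w k) :
    permLength (w * Equiv.swap a b) + 1 = permLength w := by
  classical
  set u := w * Equiv.swap a b with hu
  have hua : u a = w b := by simp [hu, Equiv.Perm.mul_apply]
  have hub : u b = w a := by simp [hu, Equiv.Perm.mul_apply]
  have huk : ∀ x : Fin m, x ≠ a → x ≠ b → u x = w x := by
    intro x h1 h2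
    simp [hu, Equiv.Perm.mul_apply, Equiv.swap_apply_of_ne_of_ne h1 h2]
  set S := Finset.univ.filter fun p : Fin m × Fin m => p.1 < p.2 ∧ u p.2 < u p.1 with hS
  set T := Finset.univ.filter fun p : Fin m × Fin m => p.1 < p.2 ∧ w p.2 < w p.1 with hT
  have habT : (a, b) ∈ T := by simp [hT, hab, hw]
  -- the bijection
  set sw : Fin m → Fin m := fun x => if x = a then b else if x = b then a else x with hsw
  have hswa : sw a = b := by simp [hsw]
  have hswb : sw b = a := by simp [hsw, hab.ne']
  have hswo : ∀ x, x ≠ a → x ≠ b → sw x = x := by intro x h1 h2; simp [hsw, h1, h2]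
  have swsw : ∀ x, sw (sw x) = x := by
    intro x
    rcases eq_or_ne x a with h | h
    · rw [h, hswa, hswb]
    · rcases eq_or_ne x b with h2 | h2
      · rw [h2, hswb, hswa]
      · rw [hswo x h h2, hswo x h h2]
  have swcond : ∀ x, (a < sw x ∧ sw x < b) ↔ (a < x ∧ x < b) := by
    intro x
    rcases eq_or_ne x a with h | h
    · rw [h, hswa]; simp [lt_irrefl]
    · rcases eq_or_ne x b with h2 | h2
      · rw [h2, hswb]; simp [lt_irrefl]
      · rw [hswo x h h2]
  set f : Fin m × Fin m → Fin m × Fin m :=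
    fun p => if (a < p.1 ∧ p.1 < b) ∨ (a < p.2 ∧ p.2 < b) then p else (sw p.1, sw p.2)
    with hf
  have hff : ∀ p : Fin m × Fin m, f (f p) = p := by
    rintro ⟨x, y⟩
    by_cases hc : (a < x ∧ x < b) ∨ (a < y ∧ y < b)
    · simp only [hf, if_pos hc]
    · have hc2 : ¬((a < sw x ∧ sw x < b) ∨ (a < sw y ∧ sw y < b)) := by
        rw [swcond, swcond]; exact hc
      simp only [hf, if_neg hc, if_neg hc2, swsw]
  have hmidf : ∀ z : Fin m, z ≤ a ∨ b ≤ z → ¬(a < z ∧ z < b) := by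
    rintro z (h | h) ⟨ha1, ha2⟩
    · exact absurd ha1 (not_lt.mpr h)
    · exact absurd ha2 (not_lt.mpr h)
  have key : S.card = (T.erase (a, b)).card := by
    apply Finset.card_nbij' f f
    · -- S → T.erase
      rintro ⟨x, y⟩ hp
      simp only [Finset.mem_coe, hS, Finset.mem_filter, Finset.mem_univ, true_and] at hp
      obtain ⟨h1, h2⟩ := hp
      simp only [Finset.mem_coe, Finset.mem_erase, hT, Finset.mem_filter, Finset.mem_univ, true_and]
      rcases eq_or_ne y a with hya | hya
      · -- y = a :  (x, a) ↦ (x, b)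
        have hxa : x < a := hya ▸ h1
        have hc : ¬((a < x ∧ x < b) ∨ (a < y ∧ y < b)) := by
          rintro (h | h)
          · exact hmidf x (Or.inl hxa.le) h
          · exact hmidf y (Or.inl hya.le) h
        have hfp : f (x, y) = (x, b) := by
          simp only [hf]
          rw [if_neg hc, hswo x hxa.ne (hxa.trans hab).ne, hya, hswa]
        rw [hya, hua, huk x hxa.ne (hxa.trans hab).ne] at h2
        rw [hfp]
        exact ⟨fun hh => hxa.ne (congrArg Prod.fst hh), hxa.trans hab, h2⟩
      · rcases eq_or_ne x b with hxb | hxb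
        · -- x = b : (b, y) ↦ (a, y), with b < y
          have hby : b < y := hxb ▸ h1
          have hyb : y ≠ b := hby.ne'
          have hc : ¬((a < x ∧ x < b) ∨ (a < y ∧ y < b)) := by
            rintro (h | h)
            · exact hmidf x (Or.inr hxb.ge) h
            · exact hmidf y (Or.inr hby.le) h
          have hfp : f (x, y) = (a, y) := by
            simp only [hf]
            rw [if_neg hc, hswo y hya hyb, hxb, hswb]
          rw [hxb, hub, huk y hya hyb] at h2
          rw [hfp]
          exact ⟨fun hh => hyb (congrArg Prod.snd hh), hab.trans hby, h2⟩
        · rcases eq_or_ne x a with hxa | hxa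
          · -- x = a
            have hay : a < y := hxa ▸ h1
            have hyb : y ≠ b := by
              intro hyb
              rw [hxa, hyb, hua, hub] at h2
              exact absurd h2 (not_lt.mpr hw.le)
            rw [hxa, hua, huk y hya hyb] at h2
            rcases lt_or_gt_of_ne hyb with hylt | hygt
            · -- a < y < b : fixed, (a, y)
              have hc : (a < x ∧ x < b) ∨ (a < y ∧ y < b) := Or.inr ⟨hxa ▸ hay, hylt⟩
              have hfp : f (x, y) = (x, y) := by simp only [hf]; rw [if_pos hc]
              rw [hfp, hxa]
              exact ⟨fun hh => hyb (congrArg Prod.snd hh), hay, h2.trans hw⟩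
            · -- y > b : (a, y) ↦ (b, y)
              have hc : ¬((a < x ∧ x < b) ∨ (a < y ∧ y < b)) := by
                rintro (h | h)
                · exact hmidf x (Or.inl hxa.le) h
                · exact hmidf y (Or.inr hygt.le) h
              have hfp : f (x, y) = (b, y) := by
                simp only [hf]
                rw [if_neg hc, hswo y hya hyb, hxa, hswa]
              rw [hfp]
              exact ⟨fun hh => hab.ne' (congrArg Prod.fst hh), hygt, h2⟩
          · rcases eq_or_ne y b with hyb | hyb
            · -- y = b, x ∉ {a, b}
              have hxby : x < b := hyb ▸ h1
              rw [hyb, hub, huk x hxa hxb] at h2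
              rcases lt_or_gt_of_ne hxa with hxlt | hxgt
              · -- x < a : (x, b) ↦ (x, a)
                have hc : ¬((a < x ∧ x < b) ∨ (a < y ∧ y < b)) := by
                  rintro (h | h)
                  · exact hmidf x (Or.inl hxlt.le) h
                  · exact hmidf y (Or.inr hyb.ge) h
                have hfp : f (x, y) = (x, a) := by
                  simp only [hf]
                  rw [if_neg hc, hswo x hxa hxb, hyb, hswb]
                rw [hfp]
                exact ⟨fun hh => hab.ne (congrArg Prod.snd hh), hxlt, h2⟩
              · -- a < x < b : fixed
                have hc : (a < x ∧ x < b) ∨ (a < y ∧ y < b) := Or.inl ⟨hxgt, hxby⟩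
                have hfp : f (x, y) = (x, y) := by simp only [hf]; rw [if_pos hc]
                rw [hfp, hyb]
                exact ⟨fun hh => hxa (congrArg Prod.fst hh), hxby, hw.trans h2⟩
            · -- x, y ∉ {a, b} : fixed by f (either branch)
              rw [huk y hya hyb, huk x hxa hxb] at h2
              have hfp : f (x, y) = (x, y) := by
                by_cases hc : (a < x ∧ x < b) ∨ (a < y ∧ y < b)
                · simp only [hf]; rw [if_pos hc]
                · simp only [hf]; rw [if_neg hc, hswo x hxa hxb, hswo y hya hyb]
              rw [hfp]
              exact ⟨fun hh => hxa (congrArg Prod.fst hh), h1, h2⟩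
    · -- T.erase → S
      rintro ⟨x, y⟩ hp
      simp only [Finset.mem_coe, Finset.mem_erase, hT, Finset.mem_filter, Finset.mem_univ, true_and] at hp
      obtain ⟨h0, h1, h2⟩ := hp
      simp only [Finset.mem_coe, hS, Finset.mem_filter, Finset.mem_univ, true_and]
      rcases eq_or_ne y a with hya | hya
      · -- y = a : (x, a) ↦ (x, b); need u b = w a < u x = w x
        have hxa : x < a := hya ▸ h1
        have hc : ¬((a < x ∧ x < b) ∨ (a < y ∧ y < b)) := by
          rintro (h | h)
          · exact hmidf x (Or.inl hxa.le) h
          · exact hmidf y (Or.inl hya.le) h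
        have hfp : f (x, y) = (x, b) := by
          simp only [hf]
          rw [if_neg hc, hswo x hxa.ne (hxa.trans hab).ne, hya, hswa]
        rw [hya] at h2
        rw [hfp]
        refine ⟨hxa.trans hab, ?_⟩
        rw [hub, huk x hxa.ne (hxa.trans hab).ne]
        exact h2
      · rcases eq_or_ne x b with hxb | hxb
        · -- x = b : (b, y) ↦ (a, y); need u y = w y < u a = w b
          have hby : b < y := hxb ▸ h1
          have hyb : y ≠ b := hby.ne'
          have hc : ¬((a < x ∧ x < b) ∨ (a < y ∧ y < b)) := by
            rintro (h | h)
            · exact hmidf x (Or.inr hxb.ge) h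
            · exact hmidf y (Or.inr hby.le) h
          have hfp : f (x, y) = (a, y) := by
            simp only [hf]
            rw [if_neg hc, hswo y hya hyb, hxb, hswb]
          rw [hxb] at h2
          rw [hfp]
          refine ⟨hab.trans hby, ?_⟩
          rw [hua, huk y hya hyb]
          exact h2
        · rcases eq_or_ne x a with hxa | hxa
          · -- x = a, y ≠ b
            have hay : a < y := hxa ▸ h1
            have hyb : y ≠ b := fun hyb => h0 (by rw [hxa, hyb])
            rw [hxa] at h2
            rcases lt_or_gt_of_ne hyb with hylt | hygt
            · -- a < y < b : fixed; need u y = w y < u a = w b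
              have hc : (a < x ∧ x < b) ∨ (a < y ∧ y < b) := Or.inr ⟨hay, hylt⟩
              have hfp : f (x, y) = (x, y) := by simp only [hf]; rw [if_pos hc]
              rw [hfp, hxa]
              refine ⟨hay, ?_⟩
              rw [hua, huk y hya hyb]
              rcases hmid y hay hylt with h | h
              · exact h
              · exact absurd h2 (not_lt.mpr h.le)
            · -- y > b : (a, y) ↦ (b, y); need u y = w y < u b = w a
              have hc : ¬((a < x ∧ x < b) ∨ (a < y ∧ y < b)) := by
                rintro (h | h)
                · exact hmidf x (Or.inl hxa.le) h
                · exact hmidf y (Or.inr hygt.le) h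
              have hfp : f (x, y) = (b, y) := by
                simp only [hf]
                rw [if_neg hc, hswo y hya hyb, hxa, hswa]
              rw [hfp]
              refine ⟨hygt, ?_⟩
              rw [hub, huk y hya hyb]
              exact h2
          · rcases eq_or_ne y b with hyb | hyb
            · -- y = b, x ∉ {a,b}
              have hxby : x < b := hyb ▸ h1
              rw [hyb] at h2
              rcases lt_or_gt_of_ne hxa with hxlt | hxgt
              · -- x < a : (x, b) ↦ (x, a); need u a = w b < u x = w x
                have hc : ¬((a < x ∧ x < b) ∨ (a < y ∧ y < b)) := by
                  rintro (h | h)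
                  · exact hmidf x (Or.inl hxlt.le) h
                  · exact hmidf y (Or.inr hyb.ge) h
                have hfp : f (x, y) = (x, a) := by
                  simp only [hf]
                  rw [if_neg hc, hswo x hxa hxb, hyb, hswb]
                rw [hfp]
                refine ⟨hxlt, ?_⟩
                rw [hua, huk x hxa hxb]
                exact h2
              · -- a < x < b : fixed; need u b = w a < u x = w x
                have hc : (a < x ∧ x < b) ∨ (a < y ∧ y < b) := Or.inl ⟨hxgt, hxby⟩
                have hfp : f (x, y) = (x, y) := by simp only [hf]; rw [if_pos hc]
                rw [hfp, hyb]
                refine ⟨hxby, ?_⟩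
                rw [hub, huk x hxa hxb]
                rcases hmid x hxgt hxby with h | h
                · exact absurd h2 (not_lt.mpr h.le)
                · exact h
            · -- both outside : fixed
              have hfp : f (x, y) = (x, y) := by
                by_cases hc : (a < x ∧ x < b) ∨ (a < y ∧ y < b)
                · simp only [hf]; rw [if_pos hc]
                · simp only [hf]; rw [if_neg hc, hswo x hxa hxb, hswo y hya hyb]
              rw [hfp, huk y hya hyb, huk x hxa hxb]
              exact ⟨h1, h2⟩
    · intro p _; exact hff p
    · intro p _; exact hff p
  have hS' : permLength (w * Equiv.swap a b) = S.card := rfl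
  have hT' : permLength w = T.card := rfl
  have hTpos : 0 < T.card := Finset.card_pos.mpr ⟨_, habT⟩
  rw [hS', hT', key, Finset.card_erase_of_mem habT]
  omega


/-- Let `w ≠ 1`, `r` its largest descent and `s` the largest index with `w(s) < w(r)`.
If there is no `j < r` with `ℓ(w t_{rs} t_{jr}) = ℓ(w)` (i.e. `w` is reduced in the
maximal-transition sense), then `w` has no descent at any position after the position
of the value `1`; equivalently `w(r+1) = 1`. -/

theorem stmt9 (n : ℕ) (w : Equiv.Perm (Fin (n + 1))) (hw : w ≠ 1)
    (r : Fin n) (hr : w r.succ < w r.castSucc)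
    (hrmax : ∀ i : Fin n, r < i → ¬ w i.succ < w i.castSucc)
    (s : Fin (n + 1)) (hs : w s < w r.castSucc)
    (hsmax : ∀ i : Fin (n + 1), s < i → ¬ w i < w r.castSucc)
    (hnone : ∀ j : Fin (n + 1), j < r.castSucc →
      permLength (w * Equiv.swap r.castSucc s * Equiv.swap j r.castSucc) ≠ permLength w) :
    (∀ i : Fin n, ((w⁻¹ 0 : Fin (n + 1)) : ℕ) < (i : ℕ) →
        ¬ w i.succ < w i.castSucc) ∧
      w r.succ = 0 := by
  classical
  have step : ∀ i : Fin n, (r : ℕ) < (i : ℕ) → w i.castSucc < w i.succ := by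
    intro i hi
    have h := hrmax i (by rwa [Fin.lt_def])
    have hle : w i.castSucc ≤ w i.succ := le_of_not_gt h
    refine hle.lt_of_ne fun he => ?_
    have := w.injective he
    rw [Fin.ext_iff] at this
    simp at this
  have chain : ∀ mm : ℕ, ∀ p q : Fin (n+1), (r : ℕ) < (p : ℕ) → p < q → (q : ℕ) ≤ mm →
      w p < w q := by
    intro mm
    induction mm with
    | zero =>
      intro p q hp hpq hq
      rw [Fin.lt_def] at hpq
      omega
    | succ mm ih =>
      intro p q hp hpq hq
      rw [Fin.lt_def] at hpq
      have hqlt := q.isLt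
      have hqn : (q : ℕ) - 1 < n := by omega
      set i : Fin n := ⟨(q : ℕ) - 1, hqn⟩ with hi
      have hisucc : i.succ = q := by
        rw [Fin.ext_iff]; simp [hi]; omega
      have hstep : w i.castSucc < w i.succ := step i (by simp [hi]; omega)
      rw [hisucc] at hstep
      by_cases hpi : (p : ℕ) = (q : ℕ) - 1
      · have hp' : p = i.castSucc := by rw [Fin.ext_iff]; simp [hi]; omega
        rw [hp']
        exact hstep
      · have h1 : w p < w i.castSucc :=
          ih p i.castSucc hp (by rw [Fin.lt_def]; simp [hi]; omega) (by simp [hi]; omega)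
        exact h1.trans hstep
  have chain' : ∀ p q : Fin (n+1), (r : ℕ) < (p : ℕ) → p < q → w p < w q :=
    fun p q hp hpq => chain (q : ℕ) p q hp hpq le_rfl
  have hrs : r.castSucc < s := by
    by_contra hcon
    exact hsmax r.succ (lt_of_le_of_lt (not_lt.mp hcon) (Fin.castSucc_lt_succ)) hr
  have hrsn : (r : ℕ) < (s : ℕ) := by
    rw [Fin.lt_def] at hrs; simpa using hrs
  have hrsucc_le : w r.succ ≤ w s := by
    have h : (r.succ : Fin (n+1)) ≤ s := by rw [Fin.le_def]; simp; omega
    rcases eq_or_lt_of_le h with he | hlt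
    · rw [he]
    · exact (chain' r.succ s (by simp) hlt).le
  have F : ∀ j : Fin (n+1), j < r.castSucc → ¬ w j < w s := by
    intro j0 hj0 hwj0
    set Sf := Finset.univ.filter (fun j : Fin (n+1) => j < r.castSucc ∧ w j < w s) with hSf
    have hne : Sf.Nonempty := ⟨j0, by simp [hSf]; exact ⟨hj0, hwj0⟩⟩
    obtain ⟨j, hjmem, hjmax⟩ := Finset.exists_max_image Sf (fun j => w j) hne
    simp only [hSf, Finset.mem_filter, Finset.mem_univ, true_and] at hjmem
    obtain ⟨hj, hwj⟩ := hjmem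
    have L1 := swap_length w r.castSucc s hrs hs (by
      intro k hk1 hk2
      exact Or.inl (chain' k s (by rw [Fin.lt_def] at hk1; simpa using hk1) hk2))
    set w' := w * Equiv.swap r.castSucc s with hw'
    set w'' := w' * Equiv.swap j r.castSucc with hw''
    have hjr : j ≠ r.castSucc := hj.ne
    have hjs : j ≠ s := (hj.trans hrs).ne
    have hw''j : w'' j = w s := by
      simp [hw'', hw', Equiv.Perm.mul_apply, Equiv.swap_apply_left]
    have hw''r : w'' r.castSucc = w j := by
      simp [hw'', hw', Equiv.Perm.mul_apply, Equiv.swap_apply_right,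
        Equiv.swap_apply_of_ne_of_ne hjr hjs]
    have hw''k : ∀ k, k ≠ j → k ≠ r.castSucc → k ≠ s → w'' k = w k := by
      intro k h1 h2 h3
      simp [hw'', hw', Equiv.Perm.mul_apply, Equiv.swap_apply_of_ne_of_ne h1 h2,
        Equiv.swap_apply_of_ne_of_ne h2 h3]
    have L2 := swap_length w'' j r.castSucc hj (by rw [hw''r, hw''j]; exact hwj) (by
      intro k hk1 hk2
      have hks : k ≠ s := (hk2.trans hrs).ne
      rw [hw''k k hk1.ne' hk2.ne hks, hw''r, hw''j]
      by_cases hks2 : w k < w s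
      · left
        have hmem : k ∈ Sf := by simp [hSf]; exact ⟨hk2, hks2⟩
        exact (hjmax k hmem).lt_of_ne fun he => hk1.ne' (w.injective he)
      · right
        exact (not_lt.mp hks2).lt_of_ne fun he => hks (w.injective he).symm)
    have hww : w'' * Equiv.swap j r.castSucc = w' := by
      rw [hw'', mul_assoc, Equiv.swap_mul_self, mul_one]
    rw [hww] at L2
    exact hnone j hj (by rw [← hw'']; omega)
  have hmin : ∀ x : Fin (n+1), w r.succ ≤ w x := by
    intro x
    rcases lt_trichotomy ((x : ℕ)) ((r : ℕ)) with h | h | h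
    · have hx : x < r.castSucc := by rw [Fin.lt_def]; simpa using h
      exact hrsucc_le.trans (not_lt.mp (F x hx))
    · have hx : x = r.castSucc := by rw [Fin.ext_iff]; simpa using h
      rw [hx]; exact hr.le
    · rcases eq_or_lt_of_le (show (r : ℕ) + 1 ≤ (x : ℕ) by omega) with he | hlt
      · have hx : x = r.succ := by rw [Fin.ext_iff]; simp; omega
        rw [hx]
      · exact (chain' r.succ x (by simp) (by rw [Fin.lt_def]; simp; omega)).le
  have h0 : w r.succ = 0 := by
    have h := hmin (w⁻¹ 0)
    rw [show w (w⁻¹ 0) = 0 from w.apply_symm_apply 0] at h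
    exact le_antisymm h (Fin.zero_le _)
  refine ⟨?_, h0⟩
  intro i hi
  have hinv : w⁻¹ 0 = r.succ := by rw [← h0, show w⁻¹ (w r.succ) = r.succ from w.symm_apply_apply _]
  rw [hinv] at hi
  apply hrmax i
  rw [Fin.lt_def]
  simp at hi
  omega
end

section
/- Let w ∈ S_N and let (b¹, b²) be a good pair of length p = ℓ(w). Then the number of pairs (a, i) with a a reduced word of w and i an a-compatible sequence with i = b² is at most the number of such pairs with i = b¹. (Equivalently, in the Schubert polynomial 𝔖_w, the coefficient of the monomial X_{b¹} is at least the coefficient of X_{b²}.) -/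
namespace Stmt13Aux


/-- simple transposition `(k, k+1)` -/
def sw (k : ℕ) : Equiv.Perm ℕ := Equiv.swap k (k+1)

/-- product of a word given as a list -/
def P (l : List ℕ) : Equiv.Perm ℕ := (l.map sw).prod

/-- the inversion set of a permutation of ℕ -/
def InvSet (u : Equiv.Perm ℕ) : Set (ℕ × ℕ) := {q | q.1 < q.2 ∧ u q.2 < u q.1}

lemma P_cons (k : ℕ) (l : List ℕ) : P (k :: l) = sw k * P l := by
  simp [P]

lemma sw_self (k : ℕ) : sw k * sw k = 1 := Equiv.swap_mul_self _ _

lemma sw_lt {k v w : ℕ} (h : v < w) (h2 : ¬(v = k ∧ w = k+1)) : sw k v < sw k w := by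
  simp only [sw, Equiv.swap_apply_def]
  split_ifs <;> omega

lemma sw_left (k : ℕ) : sw k k = k + 1 := Equiv.swap_apply_left _ _
lemma sw_right (k : ℕ) : sw k (k+1) = k := Equiv.swap_apply_right _ _

lemma sw_fix {k x : ℕ} (h : k + 1 < x) : sw k x = x :=
  Equiv.swap_apply_of_ne_of_ne (by omega) (by omega)

lemma step1 {u : Equiv.Perm ℕ} {k : ℕ} (h : u.symm k < u.symm (k+1)) :
    (u.symm k, u.symm (k+1)) ∉ InvSet u ∧
      InvSet (sw k * u) = insert (u.symm k, u.symm (k+1)) (InvSet u) := by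
  have hik : u (u.symm k) = k := u.apply_symm_apply k
  have hjk : u (u.symm (k+1)) = k + 1 := u.apply_symm_apply (k+1)
  constructor
  · intro hmem
    have := hmem.2
    rw [hik, hjk] at this
    omega
  · ext ⟨x, y⟩
    simp only [InvSet, Set.mem_setOf_eq, Set.mem_insert_iff, Equiv.Perm.mul_apply, Prod.mk.injEq]
    constructor
    · rintro ⟨hxy, hlt⟩
      by_cases hxy2 : x = u.symm k ∧ y = u.symm (k+1)
      · exact Or.inl hxy2
      · refine Or.inr ⟨hxy, ?_⟩
        by_contra hnot
        push_neg at hnot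
        have hne : u x ≠ u y := fun e => absurd (u.injective e) (Nat.ne_of_lt hxy)
        have hxy' : u x < u y := lt_of_le_of_ne hnot hne
        have : sw k (u x) < sw k (u y) := by
          apply sw_lt hxy'
          rintro ⟨e1, e2⟩
          exact hxy2 ⟨by rw [← e1, Equiv.symm_apply_apply],
            by rw [← e2, Equiv.symm_apply_apply]⟩
        omega
    · rintro (⟨hx, hy⟩ | ⟨hxy, hlt⟩)
      · subst hx; subst hy
        refine ⟨h, ?_⟩
        rw [hik, hjk, sw_left, sw_right]
        omega
      · refine ⟨hxy, ?_⟩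
        apply sw_lt hlt
        rintro ⟨h1, h2⟩
        have hy : y = u.symm k := by rw [← h1, Equiv.symm_apply_apply]
        have hx : x = u.symm (k+1) := by rw [← h2, Equiv.symm_apply_apply]
        omega

lemma step2 {u : Equiv.Perm ℕ} {k : ℕ} (h : u.symm (k+1) < u.symm k) :
    (u.symm (k+1), u.symm k) ∉ InvSet (sw k * u) ∧
      InvSet u = insert (u.symm (k+1), u.symm k) (InvSet (sw k * u)) := by
  have e1 : (sw k * u).symm k = u.symm (k+1) := by
    simp [Equiv.Perm.mul_def, Equiv.symm_trans_apply, sw]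
  have e2 : (sw k * u).symm (k+1) = u.symm k := by
    simp [Equiv.Perm.mul_def, Equiv.symm_trans_apply, sw]
  have e3 : sw k * (sw k * u) = u := by rw [← mul_assoc, sw_self, one_mul]
  have := step1 (u := sw k * u) (k := k) (by rw [e1, e2]; exact h)
  rw [e1, e2, e3] at this
  exact this

/-- multiplying by a simple transposition inserts or deletes exactly one inversion -/
lemma key (u : Equiv.Perm ℕ) (k : ℕ) :
    (∃ pr, pr ∉ InvSet u ∧ InvSet (sw k * u) = insert pr (InvSet u)) ∨
    (∃ pr, pr ∉ InvSet (sw k * u) ∧ InvSet u = insert pr (InvSet (sw k * u))) := by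
  rcases lt_trichotomy (u.symm k) (u.symm (k+1)) with h | h | h
  · exact Or.inl ⟨_, step1 h⟩
  · exact absurd (u.symm.injective h) (by omega)
  · exact Or.inr ⟨_, step2 h⟩

lemma InvSet_one : InvSet 1 = ∅ := by
  ext ⟨x, y⟩
  simp only [InvSet, Set.mem_setOf_eq, Equiv.Perm.one_apply, Set.mem_empty_iff_false, iff_false]
  omega

lemma P_finite_le (l : List ℕ) : (InvSet (P l)).Finite ∧ (InvSet (P l)).ncard ≤ l.length := by
  induction l with
  | nil => simp [P, InvSet_one]
  | cons k l ih =>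
    rw [P_cons]
    rcases key (P l) k with ⟨pr, hpr, he⟩ | ⟨pr, hpr, he⟩
    · rw [he]
      refine ⟨ih.1.insert pr, ?_⟩
      rw [Set.ncard_insert_of_notMem hpr ih.1]
      simpa using ih.2
    · have hsub : InvSet (sw k * P l) ⊆ InvSet (P l) := by rw [he]; exact Set.subset_insert _ _
      refine ⟨ih.1.subset hsub, ?_⟩
      have := Set.ncard_le_ncard hsub ih.1
      simp only [List.length_cons]
      omega

lemma suffix_of_reduced (l1 l2 : List ℕ)
    (h : (InvSet (P (l1 ++ l2))).ncard = l1.length + l2.length) :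
    (InvSet (P l2)).ncard = l2.length ∧ InvSet (P l2) ⊆ InvSet (P (l1 ++ l2)) := by
  induction l1 with
  | nil => simpa using h
  | cons k l1 ih =>
    have hx : P ((k :: l1) ++ l2) = sw k * P (l1 ++ l2) := by
      rw [List.cons_append, P_cons]
    have hfin := (P_finite_le (l1 ++ l2)).1
    have hle := (P_finite_le (l1 ++ l2)).2
    rw [hx] at h
    rcases key (P (l1 ++ l2)) k with ⟨pr, hpr, he⟩ | ⟨pr, hpr, he⟩
    · rw [he, Set.ncard_insert_of_notMem hpr hfin] at h
      have h' : (InvSet (P (l1 ++ l2))).ncard = l1.length + l2.length := by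
        simp only [List.length_cons] at h; omega
      obtain ⟨hc, hs⟩ := ih h'
      refine ⟨hc, ?_⟩
      rw [hx, he]
      exact hs.trans (Set.subset_insert _ _)
    · exfalso
      have hsub : InvSet (sw k * P (l1 ++ l2)) ⊆ InvSet (P (l1 ++ l2)) := by
        rw [he]; exact Set.subset_insert _ _
      have hfin2 := hfin.subset hsub
      have := he ▸ Set.ncard_insert_of_notMem hpr hfin2
      simp only [List.length_append, List.length_cons] at h hle
      omega

lemma symm_fix {u : Equiv.Perm ℕ} {B : ℕ} (h : ∀ x, B ≤ x → u x = x) :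
    ∀ x, B ≤ x → u.symm x = x := by
  intro x hx
  have : u (u.symm x) = u x := by rw [u.apply_symm_apply, h x hx]
  exact u.injective this

lemma InvSet_subset {u : Equiv.Perm ℕ} {B : ℕ} (h : ∀ x, B ≤ x → u x = x) :
    InvSet u ⊆ Set.Iio B ×ˢ Set.Iio B := by
  intro q hq
  obtain ⟨hxy, hlt⟩ := hq
  have hy : q.2 < B := by
    by_contra hy
    push_neg at hy
    rw [h q.2 hy] at hlt
    have hux : B ≤ u q.1 := by omega
    have h2 := h (u q.1) hux
    have h3 := u.injective h2
    omega
  exact ⟨Set.mem_Iio.mpr (by omega), Set.mem_Iio.mpr hy⟩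

lemma InvSet_finite {u : Equiv.Perm ℕ} {B : ℕ} (h : ∀ x, B ≤ x → u x = x) :
    (InvSet u).Finite :=
  ((Set.finite_Iio B).prod (Set.finite_Iio B)).subset (InvSet_subset h)

lemma min_moved {w : Equiv.Perm ℕ} (hw : w ≠ 1) :
    ∃ m, m < w m ∧ m < w.symm m := by
  have hex : ∃ m, w m ≠ m := by
    by_contra hc
    push_neg at hc
    exact hw (Equiv.ext fun x => hc x)
  classical
  obtain ⟨m, hm, hmin⟩ : ∃ m, w m ≠ m ∧ ∀ x, x < m → w x = x :=
    ⟨Nat.find hex, Nat.find_spec hex, fun x hx => by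
      by_contra hc
      exact absurd (Nat.find_le hc) (Nat.not_le.mpr hx)⟩
  have h1 : m < w m := by
    rcases Nat.lt_or_ge (w m) m with h | h
    · have := hmin _ h
      exact absurd (w.injective this) (by omega)
    · omega
  have h2 : m < w.symm m := by
    have hne : w.symm m ≠ m := fun e => hm (by conv_lhs => rw [← e, w.apply_symm_apply])
    rcases Nat.lt_or_ge (w.symm m) m with h | h
    · have h4 : w (w.symm m) = w.symm m := hmin _ h
      rw [w.apply_symm_apply] at h4
      omega
    · omega
  exact ⟨m, h1, h2⟩

lemma invset_nonempty {w : Equiv.Perm ℕ} (hw : w ≠ 1) : (InvSet w).Nonempty := by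
  obtain ⟨m, h1, h2⟩ := min_moved hw
  exact ⟨(m, w.symm m), h2, by rw [w.apply_symm_apply]; exact h1⟩

lemma chain (f : ℕ → ℕ) : ∀ b a, a ≤ b →
    (∀ k, a ≤ k → k < b → f k ≤ f (k+1)) → f a ≤ f b := by
  intro b
  induction b with
  | zero =>
    intro a hab _
    simp [Nat.le_zero.mp hab]
  | succ b ih =>
    intro a hab h
    rcases Nat.lt_or_ge b a with h1 | h1
    · have ha : a = b + 1 := by omega
      simp [ha]
    · calc f a ≤ f b := ih a h1 (fun k hk1 hk2 => h k hk1 (by omega))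
        _ ≤ f (b+1) := h b h1 (by omega)

/-- bubble sort: every finitely supported permutation has a word of length its
inversion number, with all letters below the support bound -/
lemma exists_word (N : ℕ) : ∀ (n : ℕ) (w : Equiv.Perm ℕ), (∀ k, N ≤ k → w k = k) →
    (InvSet w).ncard = n → ∃ l : List ℕ, (∀ k ∈ l, k + 1 < N) ∧ P l = w ∧ l.length = n := by
  intro n
  induction n with
  | zero =>
    intro w hsupp hc
    have hfin := InvSet_finite hsupp
    have hemp : InvSet w = ∅ := (Set.ncard_eq_zero hfin).mp hc
    have hw : w = 1 := by
      by_contra hne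
      obtain ⟨q, hq⟩ := invset_nonempty hne
      rw [hemp] at hq
      exact hq
    exact ⟨[], by simp, by simp [P, hw], rfl⟩
  | succ n ih =>
    intro w hsupp hc
    have hfin := InvSet_finite hsupp
    have hw : w ≠ 1 := by
      intro he
      rw [he, InvSet_one] at hc
      simp at hc
    obtain ⟨m, h1, h2⟩ := min_moved hw
    have hdesc : ∃ k, m ≤ k ∧ k < w m ∧ w.symm (k+1) < w.symm k := by
      by_contra hcn
      push_neg at hcn
      have hch : w.symm m ≤ w.symm (w m) :=
        chain (fun k => w.symm k) (w m) m (le_of_lt h1)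
          (fun k hk1 hk2 => Nat.not_lt.mp fun hlt => absurd hlt (not_lt.mpr (hcn k hk1 hk2)))
      rw [w.symm_apply_apply] at hch
      omega
    obtain ⟨k, hk1, hk2, hk3⟩ := hdesc
    have hkN : k + 1 < N := by
      by_contra hge
      push_neg at hge
      have e1 : w.symm (k+1) = k+1 := symm_fix hsupp _ hge
      rw [e1] at hk3
      have hwy : w (w.symm k) = k := w.apply_symm_apply k
      have : w.symm k < N := by
        by_contra hyN
        push_neg at hyN
        rw [hsupp _ hyN] at hwy
        omega
      omega
    obtain ⟨hpr, he⟩ := step2 (u := w) (k := k) hk3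
    have hsub : InvSet (sw k * w) ⊆ InvSet w := by rw [he]; exact Set.subset_insert _ _
    have hfin2 := hfin.subset hsub
    have hcard : (InvSet (sw k * w)).ncard = n := by
      have := he ▸ Set.ncard_insert_of_notMem hpr hfin2
      omega
    have hsupp2 : ∀ x, N ≤ x → (sw k * w) x = x := by
      intro x hx
      have : w x = x := hsupp x hx
      rw [Equiv.Perm.mul_apply, this, sw_fix (by omega)]
    obtain ⟨l, hl1, hl2, hl3⟩ := ih (sw k * w) hsupp2 hcard
    refine ⟨k :: l, ?_, ?_, by simp [hl3]⟩
    · intro x hx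
      rcases List.mem_cons.mp hx with h | h
      · omega
      · exact hl1 x h
    · rw [P_cons, hl2, ← mul_assoc, sw_self, one_mul]

lemma P_fix {l : List ℕ} {B : ℕ} (hl : ∀ k ∈ l, k + 1 < B) :
    ∀ x, B ≤ x → P l x = x := by
  induction l with
  | nil => intro x _; simp [P]
  | cons k l ih =>
    intro x hx
    rw [P_cons, Equiv.Perm.mul_apply, ih (fun a ha => hl a (List.mem_cons_of_mem _ ha)) x hx]
    exact sw_fix (lt_of_lt_of_le (hl k (List.mem_cons_self)) hx)

lemma list_max : ∀ l : List ℕ, l ≠ [] → ∃ M, M ∈ l ∧ ∀ k ∈ l, k ≤ M := by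
  intro l
  induction l with
  | nil => intro h; exact absurd rfl h
  | cons x xs ih =>
    intro _
    rcases eq_or_ne xs [] with h | h
    · exact ⟨x, List.mem_cons_self, by simp [h]⟩
    · obtain ⟨M, hM1, hM2⟩ := ih h
      rcases Nat.le_total x M with hx | hx
      · exact ⟨M, List.mem_cons_of_mem _ hM1, fun k hk => by
          rcases List.mem_cons.mp hk with h' | h'
          · omega
          · exact hM2 k h'⟩
      · exact ⟨x, List.mem_cons_self, fun k hk => by
          rcases List.mem_cons.mp hk with h' | h'
          · omega
          · exact le_trans (hM2 k h') hx⟩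

lemma last_split {M : ℕ} : ∀ l : List ℕ, M ∈ l →
    ∃ l1 l2, l = l1 ++ M :: l2 ∧ M ∉ l2 := by
  intro l
  induction l with
  | nil => intro h; exact absurd h List.not_mem_nil
  | cons x xs ih =>
    intro hM
    by_cases h : M ∈ xs
    · obtain ⟨l1, l2, he, hn⟩ := ih h
      exact ⟨x :: l1, l2, by rw [he]; rfl, hn⟩
    · have hx : M = x := by
        rcases List.mem_cons.mp hM with h' | h'
        · exact h'
        · exact absurd h' h
      exact ⟨[], xs, by simp [hx], h⟩

end Stmt13Aux

open Stmt13Aux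


/-- `i` is an `a`-compatible sequence. -/
def Compatible {p : ℕ} (a i : Fin p → ℕ) : Prop :=
  Monotone i ∧ (∀ j, i j ≤ a j) ∧
    ∀ (j : Fin p) (h : (j : ℕ) + 1 < p),
      a j < a ⟨(j : ℕ) + 1, h⟩ → i j < i ⟨(j : ℕ) + 1, h⟩

/-- The product of simple transpositions (`s_k = (k, k+1)`, 0-indexed) of a word. -/
def wordProd {p : ℕ} (a : Fin p → ℕ) : Equiv.Perm ℕ :=
  (List.ofFn fun j => Equiv.swap (a j) (a j + 1)).prod

/-- `a` is a reduced word for `w`: a word for `w` of minimal length. -/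
def IsReducedWord {p : ℕ} (w : Equiv.Perm ℕ) (a : Fin p → ℕ) : Prop :=
  wordProd a = w ∧ ∀ (q : ℕ) (b : Fin q → ℕ), wordProd b = w → p ≤ q

/-- `(b¹, b²)` is a good pair of (weakly increasing) sequences. -/
def GoodPair {p : ℕ} (b1 b2 : Fin p → ℕ) : Prop :=
  Monotone b1 ∧ Monotone b2 ∧ (∀ i, b1 i ≤ b2 i) ∧
    ∀ (i : Fin p) (h : (i : ℕ) + 1 < p),
      (b1 i < b1 ⟨(i : ℕ) + 1, h⟩ ↔ b2 i < b2 ⟨(i : ℕ) + 1, h⟩)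

lemma wordProd_eq_P {p : ℕ} (a : Fin p → ℕ) : wordProd a = P (List.ofFn a) := by
  rw [wordProd, P, List.map_ofFn]
  rfl

/-- every letter of a reduced word of a permutation supported on `[0, N)` is `< N` -/
lemma letters_lt {N p : ℕ} {w : Equiv.Perm ℕ} (hsupp : ∀ k, N ≤ k → w k = k)
    {a : Fin p → ℕ} (ha : IsReducedWord w a) : ∀ j, a j < N := by
  obtain ⟨haP, hmin⟩ := ha
  rw [wordProd_eq_P] at haP
  set l := List.ofFn a with hl
  have hlen : l.length = p := List.length_ofFn
  -- the inversion number of w equals p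
  have hle : (InvSet w).ncard ≤ p := by
    have := (P_finite_le l).2
    rw [haP, hlen] at this
    exact this
  have hge : p ≤ (InvSet w).ncard := by
    obtain ⟨l₀, _, hP₀, hlen₀⟩ := exists_word N ((InvSet w).ncard) w hsupp rfl
    have : wordProd (fun j : Fin l₀.length => l₀.get j) = w := by
      rw [wordProd_eq_P]
      rw [List.ofFn_get]
      exact hP₀
    have := hmin _ _ this
    omega
  have hinv : (InvSet w).ncard = p := le_antisymm hle hge
  intro j
  by_contra hNj
  push_neg at hNj
  -- take the maximal letter M ≥ N, split at its last occurrence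
  have hmem : a j ∈ l := by rw [hl]; exact List.mem_ofFn.mpr ⟨j, rfl⟩
  have hne : l ≠ [] := fun h => by rw [h] at hmem; exact List.not_mem_nil hmem
  obtain ⟨M, hMl, hMmax⟩ := list_max l hne
  have hNM : N ≤ M := le_trans hNj (hMmax _ hmem)
  obtain ⟨l1, l2, hsplit, hMl2⟩ := last_split l hMl
  -- the suffix product fixes everything ≥ M+1
  have hl2small : ∀ k ∈ l2, k + 1 < M + 1 := by
    intro k hk
    have h1 : k ≤ M := hMmax k (by rw [hsplit]; exact List.mem_append_right _ (List.mem_cons_of_mem _ hk))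
    have h2 : k ≠ M := fun e => hMl2 (e ▸ hk)
    omega
  have hfix : ∀ x, M + 1 ≤ x → P l2 x = x := P_fix hl2small
  set u2 := P l2 with hu2
  have hi : u2.symm M < M + 1 := by
    by_contra hge'
    push_neg at hge'
    have := hfix _ hge'
    rw [u2.apply_symm_apply] at this
    omega
  have hj : u2.symm (M + 1) = M + 1 := symm_fix hfix _ (le_refl _)
  obtain ⟨_, hins⟩ := step1 (u := u2) (k := M) (by rw [hj]; exact hi)
  have hmem2 : (u2.symm M, M + 1) ∈ InvSet (P (M :: l2)) := by
    rw [P_cons, ← hu2, hins, hj]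
    exact Set.mem_insert _ _
  -- this inversion persists to w
  have hred : (InvSet (P (l1 ++ M :: l2))).ncard = l1.length + (M :: l2).length := by
    rw [← hsplit, haP, hinv, ← hlen, hsplit]
    simp [List.length_append]
  obtain ⟨_, hsubinv⟩ := suffix_of_reduced l1 (M :: l2) hred
  have hmemw : (u2.symm M, M + 1) ∈ InvSet w := by
    rw [← haP, hsplit]
    exact hsubinv hmem2
  obtain ⟨hlt1, hlt2⟩ := hmemw
  simp only at hlt1 hlt2
  -- contradiction: w (M+1) = M+1 < w (symm M), but w (symm M) is a fixed point
  rw [hsupp (M+1) (by omega)] at hlt2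
  have hwfix : w (w (u2.symm M)) = w (u2.symm M) := hsupp _ (by omega)
  have := w.injective hwfix
  omega


/-- Let `w ∈ S_N` and `(b¹, b²)` a good pair of length `p = ℓ(w)` (expressed by the
existence of a reduced word of `w` of length `p`).  The number of pairs (reduced word
`a` of `w`, `a`-compatible sequence equal to `b²`) is at most the corresponding number
for `b¹`; i.e. in `𝔖_w` the coefficient of `X_{b¹}` is at least that of `X_{b²}`. -/
theorem stmt13 (N p : ℕ) (w : Equiv.Perm ℕ) (hsupp : ∀ k, N ≤ k → w k = k)
    (hp : ∃ a : Fin p → ℕ, IsReducedWord w a)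
    (b1 b2 : Fin p → ℕ) (hb : GoodPair b1 b2) :
    Set.ncard {a : Fin p → ℕ | IsReducedWord w a ∧ Compatible a b2} ≤
      Set.ncard {a : Fin p → ℕ | IsReducedWord w a ∧ Compatible a b1} := by
  obtain ⟨hmono1, hmono2, hle, hiff⟩ := hb
  have hsub : {a : Fin p → ℕ | IsReducedWord w a ∧ Compatible a b2} ⊆
      {a : Fin p → ℕ | IsReducedWord w a ∧ Compatible a b1} := by
    rintro a ⟨hred, hm, hle2, hs⟩
    exact ⟨hred, hmono1, fun j => le_trans (hle j) (hle2 j),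
      fun j h hj => (hiff j h).mpr (hs j h hj)⟩
  have hfin : {a : Fin p → ℕ | IsReducedWord w a ∧ Compatible a b1}.Finite := by
    have hpi : {a : Fin p → ℕ | IsReducedWord w a ∧ Compatible a b1} ⊆
        Set.pi Set.univ (fun _ : Fin p => Set.Iio N) := by
      rintro a ⟨hred, _⟩ j _
      exact Set.mem_Iio.mpr (letters_lt hsupp hred j)
    exact (Set.Finite.pi (fun _ => Set.finite_Iio N)).subset hpi
  exact Set.ncard_le_ncard hsub hfin
end
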